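/- Let ω > 0 and let E_ω ⊆ AddCircle(2π) be the set of points represented by real numbers ξ with 1 − cos ξ ≤ ω (this set is well defined since 1 − cos is 2π-periodic, and 1 − cos ξ = 2 sin²(ξ/2)). Then for every finite set S ⊆ ℤ and every function φ : ℤ → ℂ there exists g ∈ L²(AddCircle(2π)) (with respect to Haar measure) such that g vanishes almost everywhere outside E_ω and the Fourier coefficients of g satisfy fourierCoeff(g)(k) = φ(k) for every k ∈ S. In other words, the restriction to any finite vertex set S of the Paley–Wiener space PW_ω(ℤ) is all of ℂ^S. -/

import Mathlib

open scoped Real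
open MeasureTheory AddCircle

instance : Fact (0 < 2 * π) := ⟨by positivity⟩

/-- The subset of the circle `ℝ/2πℤ` consisting of the points represented by reals `ξ` with
`1 − cos ξ ≤ ω` (well defined since `1 − cos` is `2π`-periodic). -/
def lowFreqSet (ω : ℝ) : Set (AddCircle (2 * π)) :=
  {y : AddCircle (2 * π) | ∃ ξ : ℝ, (ξ : AddCircle (2 * π)) = y ∧ 1 - Real.cos ξ ≤ ω}

lemma PW_aux_integrable {E : Type*} [NormedAddCommGroup E] {f : AddCircle (2 * π) → E}
    (hf : Continuous f) : Integrable f (@haarAddCircle (2 * π) _) :=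
  hf.integrable_of_hasCompactSupport
    (IsCompact.of_isClosed_subset isCompact_univ (isClosed_tsupport f) (Set.subset_univ _))

lemma PW_aux_memLp {f : AddCircle (2 * π) → ℂ} (hf : Continuous f) :
    MemLp f 2 (@haarAddCircle (2 * π) _) :=
  (Lp.memLp (ContinuousMap.toLp (E := ℂ) 2 haarAddCircle ℂ ⟨f, hf⟩)).ae_eq
    (ContinuousMap.coeFn_toLp (p := 2) (𝕜 := ℂ) haarAddCircle (⟨f, hf⟩ : C(AddCircle (2 * π), ℂ)))

/-- For every `ω > 0`, every finite `S ⊆ ℤ` and every `φ : ℤ → ℂ` there is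
`g ∈ L²` of the circle, vanishing a.e. outside `E_ω`, whose Fourier coefficients agree with `φ`
on `S`: the restriction of `PW_ω(ℤ)` to any finite set of vertices is surjective. -/
theorem PW_restriction_surjective (ω : ℝ) (hω : 0 < ω) (S : Finset ℤ) (φ : ℤ → ℂ) :
    ∃ g : Lp ℂ 2 (@haarAddCircle (2 * π) _),
      (∀ᵐ x ∂(@haarAddCircle (2 * π) _), x ∉ lowFreqSet ω → (g : AddCircle (2 * π) → ℂ) x = 0) ∧
      ∀ k ∈ S, fourierCoeff (g : AddCircle (2 * π) → ℂ) k = φ k := by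
  classical
  set V : Set ℝ := {ξ | 1 - Real.cos ξ < ω} with hVdef
  have hVopen : IsOpen V := isOpen_lt (by fun_prop) continuous_const
  have hV0 : (0 : ℝ) ∈ V := by simp [hVdef, hω]
  set A : Set (AddCircle (2 * π)) := ((↑) : ℝ → AddCircle (2 * π)) '' V with hAdef
  have hAopen : IsOpen A := QuotientAddGroup.isOpenMap_coe V hVopen
  have hAmeas : MeasurableSet A := hAopen.measurableSet
  have hAsub : A ⊆ lowFreqSet ω := by
    rintro y ⟨ξ, hξ, rfl⟩
    exact ⟨ξ, rfl, le_of_lt hξ⟩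
  -- the trigonometric polynomial with coefficients c, and its truncation to A
  set P : (↥S → ℂ) → C(AddCircle (2 * π), ℂ) :=
    fun c => ∑ k : ↥S, c k • fourier (k : ℤ) with hPdef
  set G : (↥S → ℂ) → (AddCircle (2 * π) → ℂ) :=
    fun c => A.indicator ⇑(P c) with hGdef
  have hPapp : ∀ (c : ↥S → ℂ) (t : AddCircle (2 * π)),
      P c t = ∑ k : ↥S, c k * fourier (k : ℤ) t := by
    intro c t
    simp [hPdef]
  have hInd : ∀ (n : ℤ) (f : C(AddCircle (2 * π), ℂ)),
      Integrable (fun t => fourier n t • A.indicator ⇑f t) (@haarAddCircle (2 * π) _) := by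
    intro n f
    have he : (fun t => @fourier (2 * π) n t • A.indicator ⇑f t)
        = A.indicator (fun t => fourier n t * f t) := by
      ext t
      by_cases h : t ∈ A <;>
        simp [Set.indicator_of_mem, Set.indicator_of_notMem, h, smul_eq_mul]
    rw [he]
    exact (PW_aux_integrable ((map_continuous (fourier n)).mul (map_continuous f))).indicator hAmeas
  have key : ∀ (c : ↥S → ℂ) (j : ℤ), fourierCoeff (G c) j
      = ∑ k : ↥S, fourierCoeff (A.indicator ⇑(fourier ((k : ℤ))) : AddCircle (2 * π) → ℂ) j * c k := by
    intro c j
    have hpt : ∀ t : AddCircle (2 * π), fourier (-j) t • G c t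
        = ∑ k : ↥S, c k * (fourier (-j) t • A.indicator ⇑(fourier ((k : ℤ))) t) := by
      intro t
      by_cases h : t ∈ A
      · simp only [hGdef, Set.indicator_of_mem h, hPapp, smul_eq_mul, Finset.mul_sum]
        refine Finset.sum_congr rfl fun k _ => by ring
      · simp [hGdef, Set.indicator_of_notMem h]
    unfold fourierCoeff
    rw [integral_congr_ae (Filter.EventuallyEq.of_eq (funext hpt)),
      integral_finset_sum _ (fun (k : ↥S) _ => ((hInd (-j) (fourier (k : ℤ))).const_mul (c k)))]
    refine Finset.sum_congr rfl fun k _ => ?_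
    rw [integral_const_mul]
    ring
  -- the matrix of the evaluation map
  set M : Matrix ↥S ↥S ℂ :=
    fun j k => fourierCoeff (A.indicator ⇑(fourier ((k : ℤ))) : AddCircle (2 * π) → ℂ) (j : ℤ)
    with hMdef
  have hker : ∀ c : ↥S → ℂ, M.mulVec c = 0 → c = 0 := by
    intro c hc0
    have hcoeff : ∀ j : ↥S, fourierCoeff (G c) (j : ℤ) = 0 := by
      intro j
      rw [key]
      have := congrFun hc0 j
      simpa [Matrix.mulVec, dotProduct, hMdef] using this
    have hpt : ∀ t : AddCircle (2 * π),
        A.indicator (fun t => (Complex.normSq (P c t) : ℂ)) t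
          = ∑ k : ↥S, (starRingEnd ℂ) (c k) * (fourier (-(k : ℤ)) t • G c t) := by
      intro t
      by_cases h : t ∈ A
      · have hG : G c t = P c t := by rw [hGdef]; exact Set.indicator_of_mem h _
        rw [Set.indicator_of_mem h]
        calc (Complex.normSq (P c t) : ℂ)
            = (starRingEnd ℂ) (P c t) * P c t := Complex.normSq_eq_conj_mul_self
          _ = ∑ k : ↥S, (starRingEnd ℂ) (c k) * (fourier (-(k : ℤ)) t • G c t) := by
              rw [hPapp, map_sum, Finset.sum_mul]
              refine Finset.sum_congr rfl fun k _ => ?_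
              rw [map_mul, ← fourier_neg, hG, hPapp]
              simp only [smul_eq_mul]
              ring
      · simp [hGdef, Set.indicator_of_notMem h]
    have hzero : ∫ t, A.indicator (fun t => (Complex.normSq (P c t) : ℂ)) t
        ∂(@haarAddCircle (2 * π) _) = 0 := by
      rw [integral_congr_ae (Filter.EventuallyEq.of_eq (funext hpt)),
        integral_finset_sum _
          (fun (k : ↥S) _ => (((hInd (-(k : ℤ)) (P c))).const_mul ((starRingEnd ℂ) (c k))))]
      refine Finset.sum_eq_zero fun k _ => ?_
      rw [integral_const_mul]
      have : (∫ t, fourier (-(k : ℤ)) t • G c t ∂(@haarAddCircle (2 * π) _))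
          = fourierCoeff (G c) (k : ℤ) := rfl
      rw [this, hcoeff k, mul_zero]
    have hofreal : (fun t => A.indicator (fun t => (Complex.normSq (P c t) : ℂ)) t)
        = fun t => ((A.indicator (fun t => Complex.normSq (P c t)) t : ℝ) : ℂ) := by
      funext t
      by_cases h : t ∈ A <;>
        simp [Set.indicator_of_mem, Set.indicator_of_notMem, h]
    have hzeroR : ∫ t, A.indicator (fun t => Complex.normSq (P c t)) t
        ∂(@haarAddCircle (2 * π) _) = 0 := by
      have hci : Integrable (fun t => A.indicator (fun t => (Complex.normSq (P c t) : ℂ)) t)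
          (@haarAddCircle (2 * π) _) :=
        (PW_aux_integrable (Complex.continuous_ofReal.comp
          (Complex.continuous_normSq.comp (P c).continuous))).indicator hAmeas
      have h4 := integral_re hci
      rw [hzero, map_zero] at h4
      rw [← h4]
      refine integral_congr_ae (Filter.EventuallyEq.of_eq (funext fun t => ?_))
      by_cases h : t ∈ A <;>
        simp [Set.indicator_of_mem, Set.indicator_of_notMem, h, RCLike.re_to_complex]
    have hintR : Integrable (A.indicator fun t => Complex.normSq (P c t))
        (@haarAddCircle (2 * π) _) :=
      (PW_aux_integrable (Complex.continuous_normSq.comp (P c).continuous)).indicator hAmeas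
    have haezero := (integral_eq_zero_iff_of_nonneg
        (fun t => Set.indicator_nonneg (fun s _ => Complex.normSq_nonneg _) t) hintR).mp hzeroR
    have hWnull : (@haarAddCircle (2 * π) _) (A ∩ {t | P c t ≠ 0}) = 0 := by
      refine measure_mono_null (fun t ht => ?_) (ae_iff.mp haezero)
      rcases ht with ⟨htA, htP⟩
      simp only [Set.mem_setOf_eq, Set.indicator_of_mem htA, Pi.zero_apply]
      exact fun h => htP (Complex.normSq_eq_zero.mp h)
    have hWopen : IsOpen (A ∩ {t | P c t ≠ 0}) :=
      hAopen.inter (isOpen_compl_singleton.preimage (P c).continuous)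
    have hPA : ∀ t ∈ A, P c t = 0 := by
      intro t ht
      by_contra hne
      have hmem : t ∈ A ∩ {t | P c t ≠ 0} := ⟨ht, hne⟩
      rw [hWopen.eq_empty_of_measure_zero hWnull] at hmem
      exact hmem
    -- the trigonometric polynomial, viewed as an analytic function on ℝ
    set F : ℝ → ℂ := fun ξ => ∑ k : ↥S, c k * Complex.exp (((k : ℤ) : ℂ) * (ξ : ℂ) * Complex.I)
      with hFdef
    have hFP : ∀ ξ : ℝ, F ξ = P c (ξ : AddCircle (2 * π)) := by
      intro ξ
      rw [hPapp, hFdef]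
      refine Finset.sum_congr rfl fun k _ => ?_
      have h2π : (2 * (π : ℂ)) ≠ 0 :=
        mul_ne_zero two_ne_zero (Complex.ofReal_ne_zero.mpr Real.pi_ne_zero)
      have hcoe : ((2 * π : ℝ) : ℂ) = 2 * (π : ℂ) := by push_cast; ring
      have harg : (((k : ℤ) : ℂ)) * (ξ : ℂ) * Complex.I
          = 2 * (π : ℂ) * Complex.I * (((k : ℤ) : ℂ)) * (ξ : ℂ) / ((2 * π : ℝ) : ℂ) := by
        rw [hcoe, eq_div_iff h2π]
        ring
      rw [fourier_coe_apply, harg]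
    have hFanalytic : AnalyticOnNhd ℝ F Set.univ := by
      refine Finset.analyticOnNhd_fun_sum _ fun k _ => fun x _ => ?_
      refine AnalyticAt.mul analyticAt_const ?_
      have h1 : AnalyticAt ℝ (fun ξ : ℝ => (ξ : ℂ)) x := Complex.ofRealCLM.analyticAt x
      have h2 : AnalyticAt ℝ (fun ξ : ℝ => ((k : ℤ) : ℂ) * (ξ : ℂ) * Complex.I) x :=
        (analyticAt_const.mul h1).mul analyticAt_const
      exact ((analyticAt_cexp).restrictScalars).comp h2
    have hFev : F =ᶠ[nhds 0] 0 := by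
      filter_upwards [hVopen.mem_nhds hV0] with ξ hξ
      rw [hFP]
      exact hPA _ ⟨ξ, hξ, rfl⟩
    have hF0 : Set.EqOn F 0 Set.univ :=
      hFanalytic.eqOn_zero_of_preconnected_of_eventuallyEq_zero isPreconnected_univ
        (Set.mem_univ 0) hFev
    have hP0 : P c = 0 := by
      ext t
      obtain ⟨ξ, rfl⟩ := QuotientAddGroup.mk_surjective t
      have : F ξ = 0 := hF0 (Set.mem_univ ξ)
      rw [hFP] at this
      simpa using this
    -- conclude by linear independence of the characters
    funext k
    have hli := linearIndependent_iff'.mp (@orthonormal_fourier (2 * π) _).linearIndependent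
    set g' : ℤ → ℂ := fun n => if h : n ∈ S then c ⟨n, h⟩ else 0 with hg'def
    have h2 : ContinuousMap.toLp (E := ℂ) 2 haarAddCircle ℂ (P c)
        = ∑ k : ↥S, c k • (@fourierLp (2 * π) _ 2 _ (k : ℤ)) := by
      simp only [hPdef, map_sum, _root_.map_smul]
    have hsum : ∑ n ∈ S, g' n • (@fourierLp (2 * π) _ 2 _ n) = 0 := by
      rw [← Finset.sum_coe_sort S (fun n => g' n • (@fourierLp (2 * π) _ 2 _ n))]
      have e2 : ∀ k : ↥S, g' (k : ℤ) • (@fourierLp (2 * π) _ 2 _ ((k : ℤ)))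
          = c k • (@fourierLp (2 * π) _ 2 _ ((k : ℤ))) := by
        intro k
        simp only [hg'def, dif_pos k.2, Subtype.coe_eta]
      rw [Finset.sum_congr rfl fun k _ => e2 k, ← h2, hP0, map_zero]
    have := hli S g' hsum (k : ℤ) k.2
    simpa [hg'def, dif_pos k.2] using this
  have hMinj : Function.Injective M.mulVecLin := by
    rw [injective_iff_map_eq_zero]
    intro c hc
    exact hker c hc
  have hMsurj : Function.Surjective M.mulVecLin :=
    (LinearMap.injective_iff_surjective).mp hMinj
  obtain ⟨c, hc⟩ := hMsurj (fun j => φ (j : ℤ))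
  have hmem : MemLp (G c) 2 (@haarAddCircle (2 * π) _) :=
    MemLp.indicator hAmeas (PW_aux_memLp (P c).continuous)
  refine ⟨hmem.toLp (G c), ?_, ?_⟩
  · filter_upwards [hmem.coeFn_toLp] with x hx hxnot
    rw [hx, hGdef]
    exact Set.indicator_of_notMem (fun hxA => hxnot (hAsub hxA)) _
  · intro k hk
    have hcoeq : fourierCoeff ((hmem.toLp (G c)) : AddCircle (2 * π) → ℂ) k
        = fourierCoeff (G c) k := by
      unfold fourierCoeff
      refine integral_congr_ae ?_
      filter_upwards [hmem.coeFn_toLp] with t ht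
      rw [ht]
    rw [hcoeq, key c k]
    have := congrFun hc ⟨k, hk⟩
    rw [Matrix.mulVecLin_apply] at this
    simpa [Matrix.mulVecLin_apply, Matrix.mulVec, dotProduct, hMdef] using this
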